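/- Let U ⊆ ℝ² be an open set and let ν, b₁, b₂ : U → ℝ be C² functions satisfying on U the system: (i) ∂b₂/∂x¹ − ∂b₁/∂x² = 0; (ii) ∂b₁/∂x¹ + ∂b₂/∂x² = 0; (iii) (1/2)·(∂b₁/∂x¹ − ∂b₂/∂x²) = b₁·∂ν/∂x¹ − b₂·∂ν/∂x²; (iv) (1/2)·(∂b₂/∂x¹ + ∂b₁/∂x²) = b₁·∂ν/∂x² + b₂·∂ν/∂x¹. Then at every point of U where (b₁, b₂) ≠ (0, 0), the function ν is harmonic: ∂²ν/∂x¹∂x¹ + ∂²ν/∂x²∂x² = 0. -/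

import Mathlib

/-- Partial derivative of `f : ℝ × ℝ → ℝ` in the direction of the first coordinate. -/
noncomputable def pd₁ (f : ℝ × ℝ → ℝ) (p : ℝ × ℝ) : ℝ := fderiv ℝ f p (1, 0)

/-- Partial derivative of `f : ℝ × ℝ → ℝ` in the direction of the second coordinate. -/
noncomputable def pd₂ (f : ℝ × ℝ → ℝ) (p : ℝ × ℝ) : ℝ := fderiv ℝ f p (0, 1)

lemma aux_diff_pd {U : Set (ℝ × ℝ)} (hU : IsOpen U) {f : ℝ × ℝ → ℝ}
    (hf : ContDiffOn ℝ 2 f U) {p : ℝ × ℝ} (hp : p ∈ U) (v : ℝ × ℝ) :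
    DifferentiableAt ℝ (fun q => fderiv ℝ f q v) p := by
  have h1 : ContDiffOn ℝ 1 (fderiv ℝ f) U := hf.fderiv_of_isOpen hU (by norm_num)
  have hd : DifferentiableAt ℝ (fderiv ℝ f) p :=
    (h1.differentiableOn (by norm_num)).differentiableAt (hU.mem_nhds hp)
  exact hd.clm_apply (differentiableAt_const v)

lemma pd_comm {U : Set (ℝ × ℝ)} (hU : IsOpen U) {f : ℝ × ℝ → ℝ}
    (hf : ContDiffOn ℝ 2 f U) {p : ℝ × ℝ} (hp : p ∈ U) :
    pd₂ (pd₁ f) p = pd₁ (pd₂ f) p := by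
  have hfa : ContDiffAt ℝ 2 f p := hf.contDiffAt (hU.mem_nhds hp)
  have hsym : IsSymmSndFDerivAt ℝ f p := hfa.isSymmSndFDerivAt (by norm_num)
  have h1 : ContDiffOn ℝ 1 (fderiv ℝ f) U := hf.fderiv_of_isOpen hU (by norm_num)
  have hd : DifferentiableAt ℝ (fderiv ℝ f) p :=
    (h1.differentiableOn (by norm_num)).differentiableAt (hU.mem_nhds hp)
  show fderiv ℝ (fun q => fderiv ℝ f q (1, 0)) p (0, 1)
      = fderiv ℝ (fun q => fderiv ℝ f q (0, 1)) p (1, 0)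
  rw [fderiv_clm_apply hd (differentiableAt_const _),
    fderiv_clm_apply hd (differentiableAt_const _)]
  simpa using hsym (0, 1) (1, 0)

lemma pd_congr {U : Set (ℝ × ℝ)} (hU : IsOpen U) {F G : ℝ × ℝ → ℝ}
    (h : ∀ q ∈ U, F q = G q) {p : ℝ × ℝ} (hp : p ∈ U) (v : ℝ × ℝ) :
    fderiv ℝ F p v = fderiv ℝ G p v := by
  rw [Filter.EventuallyEq.fderiv_eq (Filter.eventuallyEq_of_mem (hU.mem_nhds hp) h)]

lemma pd_mul {a g : ℝ × ℝ → ℝ} {p : ℝ × ℝ} (ha : DifferentiableAt ℝ a p)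
    (hg : DifferentiableAt ℝ g p) (v : ℝ × ℝ) :
    fderiv ℝ (fun q => a q * g q) p v
      = a p * fderiv ℝ g p v + g p * fderiv ℝ a p v := by
  rw [fderiv_fun_mul ha hg]; simp

/-- If `ν, b₁, b₂` are C² on an open set `U ⊆ ℝ²` and satisfy
(i) `∂₁b₂ - ∂₂b₁ = 0`, (ii) `∂₁b₁ + ∂₂b₂ = 0`,
(iii) `(1/2)(∂₁b₁ - ∂₂b₂) = b₁·∂₁ν - b₂·∂₂ν`,
(iv) `(1/2)(∂₁b₂ + ∂₂b₁) = b₁·∂₂ν + b₂·∂₁ν` on `U`,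
then `ν` is harmonic at every point of `U` where `(b₁, b₂) ≠ (0, 0)`. -/
theorem nu_harmonic_of_system
    (U : Set (ℝ × ℝ)) (hU : IsOpen U) (ν b₁ b₂ : ℝ × ℝ → ℝ)
    (hν : ContDiffOn ℝ 2 ν U) (hb₁ : ContDiffOn ℝ 2 b₁ U) (hb₂ : ContDiffOn ℝ 2 b₂ U)
    (h1 : ∀ p ∈ U, pd₁ b₂ p - pd₂ b₁ p = 0)
    (h2 : ∀ p ∈ U, pd₁ b₁ p + pd₂ b₂ p = 0)
    (h3 : ∀ p ∈ U, (1 / 2) * (pd₁ b₁ p - pd₂ b₂ p) = b₁ p * pd₁ ν p - b₂ p * pd₂ ν p)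
    (h4 : ∀ p ∈ U, (1 / 2) * (pd₁ b₂ p + pd₂ b₁ p) = b₁ p * pd₂ ν p + b₂ p * pd₁ ν p) :
    ∀ p ∈ U, (b₁ p, b₂ p) ≠ ((0 : ℝ), (0 : ℝ)) →
      pd₁ (pd₁ ν) p + pd₂ (pd₂ ν) p = 0 := by
  intro p hp hb
  have hnp := hU.mem_nhds hp
  have db1 : DifferentiableAt ℝ b₁ p :=
    (hb₁.differentiableOn (by norm_num)).differentiableAt hnp
  have db2 : DifferentiableAt ℝ b₂ p :=
    (hb₂.differentiableOn (by norm_num)).differentiableAt hnp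
  have dn1 : DifferentiableAt ℝ (pd₁ ν) p := aux_diff_pd hU hν hp (1, 0)
  have dn2 : DifferentiableAt ℝ (pd₂ ν) p := aux_diff_pd hU hν hp (0, 1)
  -- the rewritten system
  have E1 : ∀ q ∈ U, pd₁ b₁ q = b₁ q * pd₁ ν q - b₂ q * pd₂ ν q := fun q hq => by
    have a := h2 q hq; have b := h3 q hq; linarith
  have E2 : ∀ q ∈ U, pd₂ b₁ q = b₁ q * pd₂ ν q + b₂ q * pd₁ ν q := fun q hq => by
    have a := h1 q hq; have b := h4 q hq; linarith
  have E3 : ∀ q ∈ U, pd₁ b₂ q = b₁ q * pd₂ ν q + b₂ q * pd₁ ν q := fun q hq => by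
    have a := h1 q hq; have b := h4 q hq; linarith
  have E4 : ∀ q ∈ U, pd₂ b₂ q = -(b₁ q * pd₁ ν q - b₂ q * pd₂ ν q) := fun q hq => by
    have a := h2 q hq; have b := h3 q hq; linarith
  -- product derivatives at p
  have P11a : pd₁ (fun q => b₁ q * pd₁ ν q) p
      = b₁ p * pd₁ (pd₁ ν) p + pd₁ ν p * pd₁ b₁ p := pd_mul db1 dn1 (1, 0)
  have P11b : pd₂ (fun q => b₁ q * pd₁ ν q) p
      = b₁ p * pd₂ (pd₁ ν) p + pd₁ ν p * pd₂ b₁ p := pd_mul db1 dn1 (0, 1)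
  have P12a : pd₁ (fun q => b₁ q * pd₂ ν q) p
      = b₁ p * pd₁ (pd₂ ν) p + pd₂ ν p * pd₁ b₁ p := pd_mul db1 dn2 (1, 0)
  have P12b : pd₂ (fun q => b₁ q * pd₂ ν q) p
      = b₁ p * pd₂ (pd₂ ν) p + pd₂ ν p * pd₂ b₁ p := pd_mul db1 dn2 (0, 1)
  have P21a : pd₁ (fun q => b₂ q * pd₁ ν q) p
      = b₂ p * pd₁ (pd₁ ν) p + pd₁ ν p * pd₁ b₂ p := pd_mul db2 dn1 (1, 0)
  have P21b : pd₂ (fun q => b₂ q * pd₁ ν q) p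
      = b₂ p * pd₂ (pd₁ ν) p + pd₁ ν p * pd₂ b₂ p := pd_mul db2 dn1 (0, 1)
  have P22a : pd₁ (fun q => b₂ q * pd₂ ν q) p
      = b₂ p * pd₁ (pd₂ ν) p + pd₂ ν p * pd₁ b₂ p := pd_mul db2 dn2 (1, 0)
  have P22b : pd₂ (fun q => b₂ q * pd₂ ν q) p
      = b₂ p * pd₂ (pd₂ ν) p + pd₂ ν p * pd₂ b₂ p := pd_mul db2 dn2 (0, 1)
  -- derivatives of the rewritten system
  have L1 : pd₂ (pd₁ b₁) p
      = pd₂ (fun q => b₁ q * pd₁ ν q) p - pd₂ (fun q => b₂ q * pd₂ ν q) p := by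
    show fderiv ℝ (pd₁ b₁) p (0, 1) = _
    rw [pd_congr hU E1 hp (0, 1), fderiv_fun_sub (f := fun q => b₁ q * pd₁ ν q) (g := fun q => b₂ q * pd₂ ν q) (db1.mul dn1) (db2.mul dn2)]
    rfl
  have R1 : pd₁ (pd₂ b₁) p
      = pd₁ (fun q => b₁ q * pd₂ ν q) p + pd₁ (fun q => b₂ q * pd₁ ν q) p := by
    show fderiv ℝ (pd₂ b₁) p (1, 0) = _
    rw [pd_congr hU E2 hp (1, 0), fderiv_fun_add (f := fun q => b₁ q * pd₂ ν q) (g := fun q => b₂ q * pd₁ ν q) (db1.mul dn2) (db2.mul dn1)]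
    rfl
  have L2 : pd₂ (pd₁ b₂) p
      = pd₂ (fun q => b₁ q * pd₂ ν q) p + pd₂ (fun q => b₂ q * pd₁ ν q) p := by
    show fderiv ℝ (pd₁ b₂) p (0, 1) = _
    rw [pd_congr hU E3 hp (0, 1), fderiv_fun_add (f := fun q => b₁ q * pd₂ ν q) (g := fun q => b₂ q * pd₁ ν q) (db1.mul dn2) (db2.mul dn1)]
    rfl
  have R2 : pd₁ (pd₂ b₂) p
      = -(pd₁ (fun q => b₁ q * pd₁ ν q) p - pd₁ (fun q => b₂ q * pd₂ ν q) p) := by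
    show fderiv ℝ (pd₂ b₂) p (1, 0) = _
    rw [pd_congr hU E4 hp (1, 0), fderiv_fun_neg, fderiv_fun_sub (f := fun q => b₁ q * pd₁ ν q) (g := fun q => b₂ q * pd₂ ν q) (db1.mul dn1) (db2.mul dn2)]
    rfl
  -- symmetry of second derivatives
  have Cν : pd₂ (pd₁ ν) p = pd₁ (pd₂ ν) p := pd_comm hU hν hp
  have Cb1 : pd₂ (pd₁ b₁) p = pd₁ (pd₂ b₁) p := pd_comm hU hb₁ hp
  have Cb2 : pd₂ (pd₁ b₂) p = pd₁ (pd₂ b₂) p := pd_comm hU hb₂ hp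
  -- the two key identities
  have K2 : b₂ p * (pd₁ (pd₁ ν) p + pd₂ (pd₂ ν) p) = 0 := by
    have c := Cb1
    rw [L1, R1, P11b, P22b, P12a, P21a, E1 p hp, E2 p hp, E3 p hp, E4 p hp, Cν] at c
    linear_combination -c
  have K1 : b₁ p * (pd₁ (pd₁ ν) p + pd₂ (pd₂ ν) p) = 0 := by
    have c := Cb2
    rw [L2, R2, P12b, P21b, P11a, P22a, E1 p hp, E2 p hp, E3 p hp, E4 p hp, Cν] at c
    linear_combination c
  by_contra hS
  have z1 : b₁ p = 0 := (mul_eq_zero.mp K1).resolve_right hS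
  have z2 : b₂ p = 0 := (mul_eq_zero.mp K2).resolve_right hS
  exact hb (by rw [z1, z2])
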